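/- For any subspace lattice 𝔏 in a complex Banach space, every pinch point of 𝔏 is a pinch point of Lat(Alg(𝔏)), i.e., Pin(𝔏) ⊆ Pin(Lat(Alg(𝔏))). -/

import Mathlib

open ContinuousLinearMap

/-- The closed linear span (join) of a family of subspaces. -/
noncomputable def cJoin {X : Type*} [NormedAddCommGroup X] [NormedSpace ℂ X]
    (S : Set (Submodule ℂ X)) : Submodule ℂ X :=
  (sSup S).topologicalClosure

/-- Join of two subspaces in the lattice of closed subspaces. -/
noncomputable def cJoin2 {X : Type*} [NormedAddCommGroup X] [NormedSpace ℂ X]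
    (M N : Submodule ℂ X) : Submodule ℂ X :=
  (M ⊔ N).topologicalClosure

/-- A subspace lattice: a complete lattice of closed subspaces containing the trivial ones. -/
def IsSubspaceLattice {X : Type*} [NormedAddCommGroup X] [NormedSpace ℂ X]
    (L : Set (Submodule ℂ X)) : Prop :=
  (∀ M ∈ L, IsClosed (M : Set X)) ∧ ⊥ ∈ L ∧ ⊤ ∈ L ∧
    ∀ S ⊆ L, cJoin S ∈ L ∧ sInf S ∈ L

/-- Alg(F): bounded operators leaving every member of F invariant. -/
def algOf {X : Type*} [NormedAddCommGroup X] [NormedSpace ℂ X]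
    (L : Set (Submodule ℂ X)) : Set (X →L[ℂ] X) :=
  {A | ∀ M ∈ L, ∀ x ∈ M, A x ∈ M}

/-- Lat(T): closed subspaces invariant under every operator in T. -/
def latOf {X : Type*} [NormedAddCommGroup X] [NormedSpace ℂ X]
    (T : Set (X →L[ℂ] X)) : Set (Submodule ℂ X) :=
  {M | IsClosed (M : Set X) ∧ ∀ A ∈ T, ∀ x ∈ M, A x ∈ M}

/-- The rank-one operator e ⊗ η : x ↦ η(x) • e. -/
noncomputable def rankOne {X : Type*} [NormedAddCommGroup X] [NormedSpace ℂ X]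
    (e : X) (η : X →L[ℂ] ℂ) : X →L[ℂ] X :=
  η.smulRight e

/-- The rank-one operators in a set of operators. -/
noncomputable def Rk1 {X : Type*} [NormedAddCommGroup X] [NormedSpace ℂ X]
    (T : Set (X →L[ℂ] X)) : Set (X →L[ℂ] X) :=
  {A ∈ T | ∃ (e : X) (η : X →L[ℂ] ℂ), e ≠ 0 ∧ η ≠ 0 ∧ A = rankOne e η}

/-- M₋ = ⋁{K ∈ L : M ⊄ K}. -/
noncomputable def mMinus {X : Type*} [NormedAddCommGroup X] [NormedSpace ℂ X]
    (L : Set (Submodule ℂ X)) (M : Submodule ℂ X) : Submodule ℂ X :=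
  cJoin {K | K ∈ L ∧ ¬ M ≤ K}

/-- M₊ = ⋀{K ∈ L : K ⊄ M}. -/
noncomputable def mPlus {X : Type*} [NormedAddCommGroup X] [NormedSpace ℂ X]
    (L : Set (Submodule ℂ X)) (M : Submodule ℂ X) : Submodule ℂ X :=
  sInf {K | K ∈ L ∧ ¬ K ≤ M}

/-- N_* = ⋀{M₋ : M ∈ L, M ⊄ N}. -/
noncomputable def nStar {X : Type*} [NormedAddCommGroup X] [NormedSpace ℂ X]
    (L : Set (Submodule ℂ X)) (N : Submodule ℂ X) : Submodule ℂ X :=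
  sInf {P | ∃ M, M ∈ L ∧ ¬ M ≤ N ∧ P = mMinus L M}

/-- The cyclic subspace [Alg(L)x]: closed linear span of the orbit of x under Alg(L). -/
noncomputable def cyclicSubspace {X : Type*} [NormedAddCommGroup X] [NormedSpace ℂ X]
    (L : Set (Submodule ℂ X)) (x : X) : Submodule ℂ X :=
  (Submodule.span ℂ ((fun A : X →L[ℂ] X => A x) '' algOf L)).topologicalClosure

/-- The pinch points of a family of subspaces. -/
def pinOf {X : Type*} [NormedAddCommGroup X] [NormedSpace ℂ X]
    (L : Set (Submodule ℂ X)) : Set (Submodule ℂ X) :=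
  {P | P ∈ L ∧ ∀ M ∈ L, M ≤ P ∨ P ≤ M}



/-- Hahn–Banach: a continuous functional vanishing on a closed subspace,
nonzero at a point outside it. -/
lemma exists_functional_vanishing {X : Type*} [NormedAddCommGroup X] [NormedSpace ℂ X]
    (P : Submodule ℂ X) (hP : IsClosed (P : Set X)) {m : X} (hm : m ∉ P) :
    ∃ η : X →L[ℂ] ℂ, η m ≠ 0 ∧ ∀ x ∈ P, η x = 0 := by
  haveI : IsClosed (P : Set X) := hP
  let q : X →L[ℂ] X ⧸ P :=
    P.mkQ.mkContinuous 1 (fun x => by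
      simpa using Submodule.Quotient.norm_mk_le P x)
  have hq : ∀ x : X, q x = Submodule.Quotient.mk x := fun x => rfl
  have hqm : q m ≠ 0 := by
    rw [hq, ne_eq, Submodule.Quotient.mk_eq_zero]
    exact hm
  obtain ⟨g, -, hg⟩ := exists_dual_vector ℂ (q m) (norm_ne_zero_iff.mpr hqm)
  refine ⟨g.comp q, ?_, fun x hx => ?_⟩
  · have : ‖q m‖ ≠ 0 := norm_ne_zero_iff.mpr hqm
    simp only [ContinuousLinearMap.comp_apply, hg, ne_eq, RCLike.ofReal_eq_zero]
    exact this
  · have : q x = 0 := by rw [hq, Submodule.Quotient.mk_eq_zero]; exact hx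
    simp [ContinuousLinearMap.comp_apply, this]

/-- Every pinch point of 𝔏 is a pinch point of Lat(Alg(𝔏)). -/
theorem pin_subset_pin_latAlg
    {X : Type*} [NormedAddCommGroup X] [NormedSpace ℂ X] [CompleteSpace X]
    (L : Set (Submodule ℂ X)) (hL : IsSubspaceLattice L) :
    pinOf L ⊆ pinOf (latOf (algOf L)) := by
  rintro P ⟨hPL, hPin⟩
  obtain ⟨hclosed, -, -, -⟩ := hL
  refine ⟨⟨hclosed P hPL, fun A hA x hx => hA P hPL x hx⟩, ?_⟩
  rintro M ⟨hMclosed, hMinv⟩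
  by_contra h
  push_neg at h
  obtain ⟨hMP, hPM⟩ := h
  obtain ⟨m, hmM, hmP⟩ := SetLike.not_le_iff_exists.mp hMP
  obtain ⟨p, hpP, hpM⟩ := SetLike.not_le_iff_exists.mp hPM
  obtain ⟨η, hηm, hηP⟩ := exists_functional_vanishing P (hclosed P hPL) hmP
  -- the rank-one operator x ↦ η(x) • p belongs to Alg(L)
  have hA : η.smulRight p ∈ algOf L := by
    intro K hKL x hxK
    rcases hPin K hKL with hKP | hPK
    · have : η x = 0 := hηP x (hKP hxK)
      simp [ContinuousLinearMap.smulRight_apply, this]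
    · have hpK : p ∈ K := hPK hpP
      show η x • p ∈ K
      exact K.smul_mem _ hpK
  exact hpM (by
    have h1 : (η.smulRight p) m ∈ M := hMinv _ hA m hmM
    have h2 : (η.smulRight p) m = η m • p := rfl
    rw [h2] at h1
    have := M.smul_mem (η m)⁻¹ h1
    rwa [smul_smul, inv_mul_cancel₀ hηm, one_smul] at this)
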